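/- Let H and G be complex Hilbert spaces, let Â be a positive bounded linear operator on H, let V : G → H be a bounded linear operator with V*V = I_G, and let λ > 0. Then the operator Q := (Â + λI)^{1/2} ∘ V ∘ (V*ÂV + λI_G)^{-1} ∘ V* ∘ (Â + λI)^{1/2} on H is an orthogonal projection, i.e., Q is self-adjoint and Q ∘ Q = Q. -/
import Mathlib


open ContinuousLinearMap in
/-- With `A` positive on `H`, `V* V = 1` and `μ > 0`, the operator
`Q = (A + μI)^{1/2} ∘ V ∘ (V* A V + μI)⁻¹ ∘ V* ∘ (A + μI)^{1/2}` is an orthogonal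
projection, i.e. self-adjoint and idempotent.  Here `S` denotes the unique positive
square root of `A + μI` and `B` the (unique two-sided) inverse of `V* A V + μI`. -/
theorem nystrom_Q_is_orthogonal_projection
    {H G : Type*} [NormedAddCommGroup H] [InnerProductSpace ℂ H] [CompleteSpace H]
    [NormedAddCommGroup G] [InnerProductSpace ℂ G] [CompleteSpace G]
    (A : H →L[ℂ] H) (hA : A.IsPositive)
    (V : G →L[ℂ] H) (hV : adjoint V ∘L V = 1)
    (μ : ℝ) (hμ : 0 < μ)
    (S : H →L[ℂ] H) (hS : S.IsPositive) (hS2 : S * S = A + (μ : ℂ) • 1) :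
    ∀ B : G →L[ℂ] G,
      (adjoint V ∘L A ∘L V + (μ : ℂ) • 1) * B = 1 →
      B * (adjoint V ∘L A ∘L V + (μ : ℂ) • 1) = 1 →
      IsSelfAdjoint (S * (V ∘L B ∘L adjoint V) * S) ∧
        (S * (V ∘L B ∘L adjoint V) * S) * (S * (V ∘L B ∘L adjoint V) * S)
          = S * (V ∘L B ∘L adjoint V) * S := by
  intro B hB1 hB2
  set M : G →L[ℂ] G := adjoint V ∘L A ∘L V + (μ : ℂ) • 1 with hM
  have hAsa : adjoint A = A := hA.isSelfAdjoint.adjoint_eq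
  have hSsa : adjoint S = S := hS.isSelfAdjoint.adjoint_eq
  have hMsa : adjoint M = M := by
    rw [hM]
    rw [← star_eq_adjoint]
    simp [star_add, star_smul, star_eq_adjoint, adjoint_comp, hAsa, comp_assoc,
      Complex.star_def, Complex.conj_ofReal]
  have hBsa : adjoint B = B := by
    have h1 : adjoint B * M = 1 := by
      have := congrArg star hB1
      rw [star_mul, star_one, star_eq_adjoint, star_eq_adjoint, hMsa] at this
      exact this
    calc adjoint B = adjoint B * (M * B) := by rw [hB1, mul_one]
      _ = (adjoint B * M) * B := by rw [mul_assoc]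
      _ = B := by rw [h1, one_mul]
  have hPsa : adjoint (V ∘L B ∘L adjoint V) = V ∘L B ∘L adjoint V := by
    simp [adjoint_comp, hBsa, comp_assoc]
  have hkey : (V ∘L B ∘L adjoint V) * (S * S) * (V ∘L B ∘L adjoint V)
      = V ∘L B ∘L adjoint V := by
    rw [hS2]
    have h2 : adjoint V ∘L ((A + (μ : ℂ) • 1) ∘L V) = M := by
      rw [hM]
      ext x
      simp only [comp_apply, add_apply, smul_apply, one_apply, map_add, map_smul]
      have hx := congrFun (congrArg DFunLike.coe hV) x
      simp only [comp_apply, one_apply] at hx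
      simp [hx]
    calc (V ∘L B ∘L adjoint V) * (A + (μ : ℂ) • 1) * (V ∘L B ∘L adjoint V)
        = V ∘L (B ∘L (adjoint V ∘L ((A + (μ : ℂ) • 1) ∘L V)) ∘L B) ∘L adjoint V := by
          rfl
      _ = V ∘L (B ∘L M ∘L B) ∘L adjoint V := by rw [h2]
      _ = V ∘L B ∘L adjoint V := by
          have : B ∘L M ∘L B = B := by
            calc B ∘L M ∘L B = (B * M) * B := rfl
              _ = B := by rw [hB2, one_mul]
          rw [this]
  constructor
  · show star _ = _
    simp only [star_mul, star_eq_adjoint, hSsa, hPsa, mul_assoc]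
  · calc (S * (V ∘L B ∘L adjoint V) * S) * (S * (V ∘L B ∘L adjoint V) * S)
        = S * ((V ∘L B ∘L adjoint V) * (S * S) * (V ∘L B ∘L adjoint V)) * S := by
          simp only [mul_assoc]
      _ = S * (V ∘L B ∘L adjoint V) * S := by rw [hkey]
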